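/- Let Γ be a group and X₁, …, X_n subgroups of Γ such that each Xᵢ is normal in Γ. Suppose for each i there is an element hᵢ ∈ Γ with hᵢ ≠ e, and suppose 𝒳 is a set of subgroups of Γ such that every X ∈ 𝒳 contains ⟨hᵢ⟩ for some i ≤ n, where ⟨hᵢ⟩ ⊆ Xᵢ. Then the convolution product b = (δ_e − δ_{h₁}) * ⋯ * (δ_e − δ_{h_n}) in ℂ[Γ] satisfies ∑_{k ∈ gX} b(k) = 0 for every g ∈ Γ and every X ∈ 𝒳, provided each X ∈ 𝒳 is normal in Γ. -/

import Mathlib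

open scoped Pointwise

/-- If `h₁, …, h_n` are nontrivial elements with `hᵢ ∈ Xᵢ` for normal subgroups `Xᵢ`,
and every member of a family `𝒳` of normal subgroups contains some `hᵢ`, then the
convolution product `b = (δ_e - δ_{h₁}) * ⋯ * (δ_e - δ_{h_n})` in `ℂ[Γ]` has vanishing
sums over every coset of every `X ∈ 𝒳`. -/
theorem stmt_19 {Γ : Type*} [Group Γ] {n : ℕ} (h : Fin n → Γ)
    (Xs : Fin n → Subgroup Γ) (hXs : ∀ i, (Xs i).Normal) (hmem : ∀ i, h i ∈ Xs i)
    (hne : ∀ i, h i ≠ 1)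
    (𝒳 : Set (Subgroup Γ))
    (hnormal : ∀ X ∈ 𝒳, X.Normal)
    (hcontain : ∀ X ∈ 𝒳, ∃ i, h i ∈ X) :
    ∀ g : Γ, ∀ X ∈ 𝒳,
      ∑ᶠ k ∈ (g • (X : Set Γ)),
        ((List.ofFn fun i =>
          MonoidAlgebra.single (1 : Γ) (1 : ℂ) - MonoidAlgebra.single (h i) (1 : ℂ)).prod).coeff k
        = 0 := by
  intro g X hX
  obtain ⟨i, hi⟩ := hcontain X hX
  haveI := hnormal X hX
  set b : MonoidAlgebra ℂ Γ := (List.ofFn fun i =>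
    MonoidAlgebra.single (1 : Γ) (1 : ℂ) - MonoidAlgebra.single (h i) (1 : ℂ)).prod with hb
  classical
  set φ := MonoidAlgebra.mapDomainRingHom ℂ (QuotientGroup.mk' X) with hφ
  have hφb : φ b = 0 := by
    rw [hb, map_list_prod, List.map_ofFn]
    apply List.prod_eq_zero
    refine List.mem_ofFn.2 ⟨i, ?_⟩
    have h1 : (QuotientGroup.mk' X) (h i) = 1 := (QuotientGroup.eq_one_iff _).2 hi
    have e : ∀ a : Γ, φ (MonoidAlgebra.single a 1) = MonoidAlgebra.single
        ((QuotientGroup.mk' X) a) (1 : ℂ) := fun a => MonoidAlgebra.mapDomain_single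
    simp only [Function.comp_apply, map_sub, e, h1, map_one, sub_self]
  have key : (φ b).coeff (QuotientGroup.mk g) = ∑ᶠ k ∈ (g • (X : Set Γ)), b.coeff k := by
    have h2 : (φ b : MonoidAlgebra ℂ (Γ ⧸ X)).coeff = Finsupp.mapDomain (QuotientGroup.mk' X) b.coeff := rfl
    rw [h2, Finsupp.mapDomain, Finsupp.sum_apply]
    rw [finsum_mem_eq_sum_of_inter_support_eq
      (f := fun k => b.coeff k) (s := g • (X : Set Γ))
      (t := b.coeff.support.filter (fun k => k ∈ g • (X : Set Γ))) ?eq]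
    case eq =>
      ext x
      simp only [Finset.coe_filter, Set.mem_inter_iff, Set.mem_setOf_eq, Finsupp.mem_support_iff,
        Function.mem_support]
      tauto
    rw [Finsupp.sum, Finset.sum_filter]
    refine Finset.sum_congr rfl fun x _ => ?_
    have : ((QuotientGroup.mk' X) x : Γ ⧸ X) = QuotientGroup.mk g ↔ x ∈ g • (X : Set Γ) := by
      rw [QuotientGroup.mk'_apply, QuotientGroup.eq, mem_leftCoset_iff]
      constructor
      · intro hx; simpa using X.inv_mem hx
      · intro hx; simpa using X.inv_mem hx
    rw [QuotientGroup.mk'_apply] at this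
    rw [Finsupp.single_apply]
    by_cases hc : x ∈ g • (X : Set Γ) <;> simp [hc, this]
  rw [← key, hφb]
  rfl
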